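/- (Until transfer across compatible blocks) Let w ≡_d w' with induced map f and φ1, φ2 Prompt-LTL\X formulas. If (w, i, k) ⊨ φ1 U φ2 and the induction hypotheses hold (for all e, if (w,e,k) ⊨ φ1 then (w',l,d·k) ⊨ φ1 for all l ∈ f(e), and similarly for φ2), then for all j ∈ f(i), (w', j, d·k) ⊨ φ1 U φ2. -/

import Mathlib

/-- Start position of the `i`-th block in a decomposition with block lengths `n`. -/
def blockStart (n : ℕ → ℕ) (i : ℕ) : ℕ := ∑ l ∈ Finset.range i, n l

/-- Position `j` belongs to the `i`-th block of the decomposition with lengths `n`. -/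
def inBlock (n : ℕ → ℕ) (i j : ℕ) : Prop :=
  blockStart n i ≤ j ∧ j < blockStart n i + n i

/-- `n` is a block decomposition of the infinite word `w`: all blocks are nonempty
and `w` is constant on each block. -/
def IsDecomp {α : Type*} (w : ℕ → α) (n : ℕ → ℕ) : Prop :=
  (∀ i, 1 ≤ n i) ∧ ∀ i j, inBlock n i j → w j = w (blockStart n i)

/-- The decompositions `n`, `m` of `w`, `w'` are `d`-compatible: corresponding blocks
carry the same letter and their lengths differ by a factor of at most `d`. -/
def Compat {α : Type*} (d : ℕ) (w w' : ℕ → α) (n m : ℕ → ℕ) : Prop :=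
  IsDecomp w n ∧ IsDecomp w' m ∧
  (∀ i, n i ≤ d * m i) ∧ (∀ i, m i ≤ d * n i) ∧
  ∀ i, w (blockStart n i) = w' (blockStart m i)

/-- `w` and `w'` are `d`-stutter equivalent. -/
def StutterEquiv {α : Type*} (d : ℕ) (w w' : ℕ → α) : Prop :=
  ∃ n m : ℕ → ℕ, Compat d w w' n m

/-- Membership in the position-correspondence map `f` induced by the decompositions
`n`, `m`: `j ∈ f(i)` iff `i` lies in the `y`-th block of `n` and `j` in the `y`-th
block of `m`, for some `y`. -/
def fmem (n m : ℕ → ℕ) (i j : ℕ) : Prop :=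
  ∃ y, inBlock n y i ∧ inBlock m y j

/-- Prompt-LTL without Next: atoms, negated atoms, ∨, ∧, prompt-eventually, Until, Release. -/
inductive PLTL (AP : Type*) : Type _
  | atom : AP → PLTL AP
  | natom : AP → PLTL AP
  | disj : PLTL AP → PLTL AP → PLTL AP
  | conj : PLTL AP → PLTL AP → PLTL AP
  | fp : PLTL AP → PLTL AP
  | untl : PLTL AP → PLTL AP → PLTL AP
  | rel : PLTL AP → PLTL AP → PLTL AP

/-- Semantics of Prompt-LTL\X over infinite words `w : ℕ → Set AP`, position `i`, bound `k`. -/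
def sat {AP : Type*} (w : ℕ → Set AP) : ℕ → ℕ → PLTL AP → Prop
  | i, _, .atom a => a ∈ w i
  | i, _, .natom a => a ∉ w i
  | i, k, .disj φ ψ => sat w i k φ ∨ sat w i k ψ
  | i, k, .conj φ ψ => sat w i k φ ∧ sat w i k ψ
  | i, k, .fp φ => ∃ j, i ≤ j ∧ j ≤ i + k ∧ sat w j k φ
  | i, k, .untl φ ψ => ∃ j, i ≤ j ∧ sat w j k ψ ∧ ∀ e, i ≤ e → e < j → sat w e k φ
  | i, k, .rel φ ψ => ∀ j, i ≤ j → sat w j k ψ ∨ ∃ e, i ≤ e ∧ e < j ∧ sat w e k φ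


lemma bs_succ (n : ℕ → ℕ) (y : ℕ) : blockStart n (y+1) = blockStart n y + n y :=
  Finset.sum_range_succ _ _

lemma bs_mono (n : ℕ → ℕ) {y y' : ℕ} (h : y ≤ y') : blockStart n y ≤ blockStart n y' :=
  Finset.sum_le_sum_of_subset (Finset.range_mono h)

lemma block_lt {n : ℕ → ℕ} {y y' i i' : ℕ} (hy : inBlock n y i)
    (hy' : inBlock n y' i') (hlt : y < y') : i < i' := by
  calc i < blockStart n y + n y := hy.2
    _ = blockStart n (y+1) := (bs_succ n y).symm
    _ ≤ blockStart n y' := bs_mono n hlt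
    _ ≤ i' := hy'.1

lemma exists_block {n : ℕ → ℕ} (h1 : ∀ i, 1 ≤ n i) (j : ℕ) : ∃ z, inBlock n z j := by
  induction j with
  | zero => exact ⟨0, le_refl _, by simpa [inBlock, blockStart] using Nat.lt_of_lt_of_le Nat.zero_lt_one (h1 0)⟩
  | succ j ih =>
    obtain ⟨z, hz1, hz2⟩ := ih
    rcases lt_or_ge (j+1) (blockStart n z + n z) with hlt | hge
    · exact ⟨z, le_trans hz1 (Nat.le_succ j), hlt⟩
    · refine ⟨z+1, ?_, ?_⟩
      · rw [bs_succ]; exact hge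
      · rw [bs_succ]
        have : j + 1 = blockStart n z + n z := le_antisymm hz2 hge
        have h2 := h1 (z+1)
        omega
        
/-- Until transfer across compatible blocks: if (w,i,k) ⊨ φ1 U φ2 and the induction
hypotheses hold for φ1 and φ2, then (w',j,d·k) ⊨ φ1 U φ2 for all j ∈ f(i). -/
theorem until_transfer {AP : Type*} (d k i : ℕ) (w w' : ℕ → Set AP) (n m : ℕ → ℕ)
    (φ1 φ2 : PLTL AP) (h : Compat d w w' n m)
    (hsat : sat w i k (.untl φ1 φ2))
    (H1 : ∀ e, sat w e k φ1 → ∀ l, fmem n m e l → sat w' l (d * k) φ1)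
    (H2 : ∀ e, sat w e k φ2 → ∀ l, fmem n m e l → sat w' l (d * k) φ2) :
    ∀ j, fmem n m i j → sat w' j (d * k) (.untl φ1 φ2) := by
  obtain ⟨⟨hn1, _⟩, ⟨hm1, _⟩, _, _, _⟩ := h
  rintro j ⟨y, hiy, hjy⟩
  obtain ⟨mp, him, hφ2, hφ1⟩ := hsat
  obtain ⟨y', hy'⟩ := exists_block hn1 mp
  have hyy' : y ≤ y' := by
    by_contra hlt
    exact absurd (block_lt hy' hiy (lt_of_not_ge hlt)) (not_lt.2 him)
  rcases eq_or_lt_of_le hyy' with heq | hlt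
  · refine ⟨j, le_refl j, ?_, fun e he1 he2 => absurd he1 (not_le.2 he2)⟩
    exact H2 mp hφ2 j ⟨y, heq ▸ hy', hjy⟩
  · refine ⟨blockStart m y', ?_, ?_, ?_⟩
    · refine le_of_lt ?_
      calc j < blockStart m y + m y := hjy.2
        _ = blockStart m (y+1) := (bs_succ m y).symm
        _ ≤ blockStart m y' := bs_mono m hlt
    · exact H2 mp hφ2 _ ⟨y', hy', le_refl _, Nat.lt_add_of_pos_right (hm1 y')⟩
    · intro e' he1 he2
      obtain ⟨z, hz⟩ := exists_block hm1 e'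
      have hyz : y ≤ z := by
        by_contra hzy
        exact absurd (block_lt hz hjy (lt_of_not_ge hzy)) (not_lt.2 he1)
      have hzy' : z < y' := by
        by_contra hge
        exact absurd (le_trans (bs_mono m (le_of_not_gt hge)) hz.1) (not_le.2 he2)
      rcases eq_or_lt_of_le hyz with heq | hylt
      · have hiφ : sat w i k φ1 := hφ1 i (le_refl i) (block_lt hiy hy' hlt)
        exact H1 i hiφ e' ⟨y, hiy, heq ▸ hz⟩
      · have hbz : inBlock n z (blockStart n z) :=
          ⟨le_refl _, Nat.lt_add_of_pos_right (hn1 z)⟩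
        have hie : i ≤ blockStart n z := le_of_lt (block_lt hiy hbz hylt)
        have hem : blockStart n z < mp := block_lt hbz hy' hzy'
        exact H1 _ (hφ1 _ hie hem) e' ⟨z, hbz, hz⟩
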